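/- (Complementary-dual principle) If (x̄, λ̄, μ̄, ς̄) is a stationary point of Ξ with (λ̄, μ̄, ς̄) ∈ S_a, then x̄ is a critical point of the constrained problem (P) with Lagrange multipliers λ̄, μ̄, and Π(x̄) = L(x̄, λ̄, μ̄) = Ξ(x̄, λ̄, μ̄, ς̄). -/

import Mathlib

open scoped RealInnerProductSpace

/-- Complementary-dual principle: a stationary point of Ξ with (λ,μ,ς) ∈ S_a gives a
critical point of (P) with λ, μ its Lagrange multipliers and Π(x̄) = L(x̄,λ,μ) = Ξ(x̄,λ,μ,ς). -/
theorem stmt_13 (n : ℕ) (A : Matrix (Fin n) (Fin n) ℝ) (hA : A.PosDef)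
    (r α η : ℝ) (hr : 0 < r) (hα : 0 < α)
    (f c : EuclideanSpace ℝ (Fin n))
    (hdisj : ∀ w : EuclideanSpace ℝ (Fin n),
      ¬(1 / 2 * (⟪w, Matrix.toEuclideanLin A w⟫ - r ^ 2) = 0 ∧
        α / 2 * (1 / 2 * ‖w - c‖ ^ 2 - η) ^ 2 - ⟪f, w - c⟫ = 0))
    (y z : EuclideanSpace ℝ (Fin n)) (lam mu sig : ℝ)
    (e1 : y - z + lam • (Matrix.toEuclideanLin A y) = 0)
    (e2 : z - y + (mu * sig) • (z - c) - mu • f = 0)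
    (e3 : 1 / 2 * (⟪y, Matrix.toEuclideanLin A y⟫ - r ^ 2) = 0)
    (e4 : (1 / 2 * ‖z - c‖ ^ 2) * sig - (sig ^ 2 / (2 * α) + η * sig) - ⟪f, z - c⟫ = 0)
    (e5 : mu * (1 / 2 * ‖z - c‖ ^ 2 - (sig / α + η)) = 0)
    (hSa : IsUnit ((1 + mu * sig) • (1 + lam • A) - 1)) :
    -- x̄ is a critical (KKT) point of (P): ∇ₓL = 0 and feasibility
    (y - z + lam • (Matrix.toEuclideanLin A y) = 0) ∧
    (z - y + mu • ((α * (1 / 2 * ‖z - c‖ ^ 2 - η)) • (z - c) - f) = 0) ∧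
    (1 / 2 * (⟪y, Matrix.toEuclideanLin A y⟫ - r ^ 2) = 0) ∧
    (α / 2 * (1 / 2 * ‖z - c‖ ^ 2 - η) ^ 2 - ⟪f, z - c⟫ = 0) ∧
    -- Π(x̄) = L(x̄, λ, μ) = Ξ(x̄, λ, μ, ς)
    (1 / 2 * ‖y - z‖ ^ 2 =
      1 / 2 * ‖y - z‖ ^ 2 +
        lam * (1 / 2 * (⟪y, Matrix.toEuclideanLin A y⟫ - r ^ 2)) +
        mu * (α / 2 * (1 / 2 * ‖z - c‖ ^ 2 - η) ^ 2 - ⟪f, z - c⟫)) ∧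
    (1 / 2 * ‖y - z‖ ^ 2 +
        lam * (1 / 2 * (⟪y, Matrix.toEuclideanLin A y⟫ - r ^ 2)) +
        mu * (α / 2 * (1 / 2 * ‖z - c‖ ^ 2 - η) ^ 2 - ⟪f, z - c⟫) =
      1 / 2 * ‖y - z‖ ^ 2 +
        lam * (1 / 2 * (⟪y, Matrix.toEuclideanLin A y⟫ - r ^ 2)) +
        mu * ((1 / 2 * ‖z - c‖ ^ 2) * sig - (sig ^ 2 / (2 * α) + η * sig) -
          ⟪f, z - c⟫)) := by
  -- First show mu ≠ 0
  have hmu : mu ≠ 0 := by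
    intro hm
    subst hm
    -- e2 gives z = y
    have hzy : z = y := by
      have h2 : z - y = 0 := by simpa using e2
      exact sub_eq_zero.mp h2
    -- hSa gives IsUnit (lam • A)
    have hU : IsUnit (lam • A) := by simpa using hSa
    -- e1 gives (lam • A) acts as 0 on y
    have h1 : Matrix.toEuclideanLin (lam • A) y = 0 := by
      rw [map_smul]
      have := e1
      rw [hzy] at this
      simpa using this
    have hmv : Matrix.mulVec (lam • A) ((WithLp.equiv 2 (Fin n → ℝ)) y) = 0 := by
      have := congrArg (WithLp.equiv 2 (Fin n → ℝ)) h1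
      exact this
    obtain ⟨u, hu⟩ := hU
    have hy0 : y = 0 := by
      have hinv : (↑u⁻¹ : Matrix (Fin n) (Fin n) ℝ) * (lam • A) = 1 := by
        rw [← hu]; exact u.inv_mul
      have : Matrix.mulVec ((↑u⁻¹ : Matrix (Fin n) (Fin n) ℝ) * (lam • A))
          ((WithLp.equiv 2 (Fin n → ℝ)) y) = 0 := by
        rw [← Matrix.mulVec_mulVec, hmv, Matrix.mulVec_zero]
      rw [hinv, Matrix.one_mulVec] at this
      have := congrArg (WithLp.equiv 2 (Fin n → ℝ)).symm this
      simpa using this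
    rw [hy0] at e3
    simp [inner_zero_left] at e3
    nlinarith [e3, hr]
  -- From e5 : sig = α * (t - η)
  have hsig : α * (1 / 2 * ‖z - c‖ ^ 2 - η) = sig := by
    have h5 : 1 / 2 * ‖z - c‖ ^ 2 - (sig / α + η) = 0 :=
      (mul_eq_zero.mp e5).resolve_left hmu
    field_simp at h5 ⊢
    linarith
  have hg : α / 2 * (1 / 2 * ‖z - c‖ ^ 2 - η) ^ 2 - ⟪f, z - c⟫ = 0 := by
    have hF : ⟪f, z - c⟫ =
        (1 / 2 * ‖z - c‖ ^ 2) * sig - (sig ^ 2 / (2 * α) + η * sig) := by linarith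
    rw [hF, ← hsig]
    field_simp
    ring
  refine ⟨e1, ?_, e3, hg, ?_, ?_⟩
  · rw [hsig]
    calc z - y + mu • (sig • (z - c) - f)
        = z - y + (mu * sig) • (z - c) - mu • f := by
          rw [smul_sub, smul_smul]; abel
      _ = 0 := e2
  · rw [e3, hg]; ring
  · rw [e3, hg, e4]
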